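/- Let f: ℝ^d → ℝ be continuously differentiable with |f(x) − ⟨∇f(x), x⟩| ≤ κ for all x, and fix r > 0. Then there exist constants C₁, C₂ ≥ 0 such that |f(x)| ≤ C₁‖x‖ for all x with ‖x‖ ≥ r, and |f(x)| ≤ C₁‖x‖ + C₂ for all x. -/

import Mathlib

open Real

theorem stmt_14 (d : ℕ) (f : EuclideanSpace ℝ (Fin d) → ℝ) (κ r : ℝ)
    (hκ : 0 < κ) (hr : 0 < r) (hf : ContDiff ℝ 1 f)
    (hnh : ∀ x, |f x - inner ℝ (gradient f x) x| ≤ κ) :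
    ∃ C₁ C₂ : ℝ, 0 ≤ C₁ ∧ 0 ≤ C₂ ∧
      (∀ x, r ≤ ‖x‖ → |f x| ≤ C₁ * ‖x‖) ∧
      (∀ x, |f x| ≤ C₁ * ‖x‖ + C₂) := by
  have hfd : Differentiable ℝ f := hf.differentiable one_ne_zero
  have hfc : Continuous f := hfd.continuous
  -- rewrite hypothesis in terms of fderiv
  have hnh' : ∀ y, |f y - fderiv ℝ f y y| ≤ κ := by
    intro y
    have : (inner ℝ (gradient f y) y : ℝ) = fderiv ℝ f y y := by
      simp [gradient, InnerProductSpace.toDual_symm_apply]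
    rw [← this]; exact hnh y
  -- bound on closed ball
  obtain ⟨M0, hM0⟩ := (isCompact_closedBall (0 : EuclideanSpace ℝ (Fin d)) r).exists_bound_of_continuousOn hfc.continuousOn
  set M : ℝ := max M0 0 with hMdef
  have hMnn : 0 ≤ M := le_max_right _ _
  have hM : ∀ y ∈ Metric.closedBall (0 : EuclideanSpace ℝ (Fin d)) r, |f y| ≤ M := by
    intro y hy
    calc |f y| = ‖f y‖ := (Real.norm_eq_abs _).symm
    _ ≤ M0 := hM0 y hy
    _ ≤ M := le_max_left _ _
  have hmain : ∀ x, r ≤ ‖x‖ → |f x| ≤ (M + κ) / r * ‖x‖ := by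
    intro x hx
    have hxpos : 0 < ‖x‖ := lt_of_lt_of_le hr hx
    set u : EuclideanSpace ℝ (Fin d) := (r / ‖x‖) • x with hu
    have hunorm : ‖u‖ = r := by
      rw [hu, norm_smul, Real.norm_eq_abs, abs_of_pos (by positivity)]
      field_simp
    set s : ℝ := ‖x‖ / r with hs
    have hs1 : 1 ≤ s := (one_le_div hr).2 hx
    have hsu : s • u = x := by
      rw [hu, smul_smul, hs]
      have : ‖x‖ / r * (r / ‖x‖) = 1 := by field_simp
      rw [this, one_smul]
    -- derivative facts
    have hF : ∀ t : ℝ, HasDerivAt (fun t : ℝ => f (t • u)) (fderiv ℝ f (t • u) u) t := by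
      intro t
      have h1 : HasDerivAt (fun t : ℝ => t • u) u t := by
        simpa using (hasDerivAt_id t).smul_const u
      exact (hfd (t • u)).hasFDerivAt.comp_hasDerivAt t h1
    have key : ∀ (σ : ℝ), (σ = 1 ∨ σ = -1) →
        AntitoneOn (fun t : ℝ => σ * f (t • u) / t + κ / t) (Set.Icc 1 s) := by
      intro σ hσ
      have hσ1 : |σ| = 1 := by rcases hσ with h | h <;> simp [h]
      apply antitoneOn_of_deriv_nonpos (convex_Icc 1 s)
      · apply ContinuousOn.add
        · apply ContinuousOn.div
          · exact (continuous_const.mul (hfc.comp (continuous_id.smul continuous_const))).continuousOn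
          · exact continuousOn_id
          · intro t ht; exact ne_of_gt (lt_of_lt_of_le one_pos ht.1)
        · apply ContinuousOn.div continuousOn_const continuousOn_id
          intro t ht; exact ne_of_gt (lt_of_lt_of_le one_pos ht.1)
      · intro t ht
        rw [interior_Icc] at ht
        have htpos : 0 < t := lt_trans one_pos ht.1
        have hder : HasDerivAt (fun t : ℝ => σ * f (t • u) / t + κ / t)
            ((σ * fderiv ℝ f (t • u) u * t - σ * f (t • u) * 1) / t ^ 2
              + (0 * t - κ * 1) / t ^ 2) t := by
          exact (((hF t).const_mul σ).div (hasDerivAt_id t) htpos.ne').add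
            ((hasDerivAt_const t κ).div (hasDerivAt_id t) htpos.ne')
        exact hder.differentiableAt.differentiableWithinAt
      · intro t ht
        rw [interior_Icc] at ht
        have htpos : 0 < t := lt_trans one_pos ht.1
        have hder : HasDerivAt (fun t : ℝ => σ * f (t • u) / t + κ / t)
            ((σ * fderiv ℝ f (t • u) u * t - σ * f (t • u) * 1) / t ^ 2
              + (0 * t - κ * 1) / t ^ 2) t := by
          exact (((hF t).const_mul σ).div (hasDerivAt_id t) htpos.ne').add
            ((hasDerivAt_const t κ).div (hasDerivAt_id t) htpos.ne')
        rw [hder.deriv]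
        have hfd2 : fderiv ℝ f (t • u) (t • u) = t * fderiv ℝ f (t • u) u := by
          have h := (fderiv ℝ f (t • u)).map_smul t u
          rw [h, smul_eq_mul]
        have hb := hnh' (t • u)
        rw [abs_sub_comm, abs_le] at hb
        have hσb : σ * fderiv ℝ f (t • u) u * t - σ * f (t • u) * 1 ≤ κ := by
          rcases hσ with h | h <;>
          · subst h
            nlinarith [hb.1, hb.2, hfd2]
        have ht2 : (0 : ℝ) < t ^ 2 := by positivity
        rw [div_add_div _ _ (ne_of_gt ht2) (ne_of_gt ht2)]
        apply div_nonpos_of_nonpos_of_nonneg _ (by positivity)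
        nlinarith [hσb]
    have hmem1 : (1 : ℝ) ∈ Set.Icc 1 s := ⟨le_refl _, hs1⟩
    have hmems : s ∈ Set.Icc 1 s := ⟨hs1, le_refl _⟩
    have huball : u ∈ Metric.closedBall (0 : EuclideanSpace ℝ (Fin d)) r := by
      simp [Metric.mem_closedBall, dist_eq_norm, hunorm]
    have hMu : |f u| ≤ M := hM u huball
    have hspos : 0 < s := lt_of_lt_of_le one_pos hs1
    have h1 := key 1 (Or.inl rfl) hmem1 hmems hs1
    have h2 := key (-1) (Or.inr rfl) hmem1 hmems hs1
    simp only [one_mul, neg_one_mul, one_smul, hsu] at h1 h2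
    -- h1 : f x / s + κ / s ≤ f u / 1 + κ / 1
    have hks : 0 < κ / s := by positivity
    have habs : |f x| ≤ s * (M + κ) := by
      rw [abs_le]
      constructor
      · have : -f x / s ≤ |f u| + κ := by
          calc -f x / s ≤ -f x / s + κ / s := by linarith
          _ ≤ -f u / 1 + κ / 1 := h2
          _ ≤ |f u| + κ := by
              have := neg_abs_le (f u); simp; linarith [neg_le_abs (f u), abs_nonneg (f u), neg_abs_le (f u)]
        have : -f x ≤ s * (|f u| + κ) := by
          rw [div_le_iff₀ hspos] at this; linarith [this]
        nlinarith [hMu, abs_nonneg (f u)]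
      · have : f x / s ≤ |f u| + κ := by
          calc f x / s ≤ f x / s + κ / s := by linarith
          _ ≤ f u / 1 + κ / 1 := h1
          _ ≤ |f u| + κ := by simp; linarith [le_abs_self (f u)]
        have : f x ≤ s * (|f u| + κ) := by
          rw [div_le_iff₀ hspos] at this; linarith [this]
        nlinarith [hMu, abs_nonneg (f u)]
    calc |f x| ≤ s * (M + κ) := habs
    _ = (M + κ) / r * ‖x‖ := by rw [hs]; field_simp
  refine ⟨(M + κ) / r, M, by positivity, hMnn, hmain, ?_⟩
  · intro x
    by_cases hx : r ≤ ‖x‖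
    · have := hmain x hx
      linarith
    · push_neg at hx
      have : |f x| ≤ M := hM x (by simp [Metric.mem_closedBall, dist_eq_norm]; linarith)
      have : 0 ≤ (M + κ) / r * ‖x‖ := by positivity
      linarith
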